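/- arXiv:1802.03681 — 7 statements merged into one kernel-verified Lean document; each statement's English description precedes it below -/
import Mathlib

section
/- Let G : ℝ → ℝ be twice continuously differentiable and satisfy the ODE (1/2)·G''(x) + (x/2)·G'(x) + G(x) − (1/2)·G(x)² = 0 for all x ∈ ℝ. Define v : (0,∞) × ℝ → ℝ by v(t,x) = t⁻¹·G(t^{-1/2}·x). Then v is C^{1,2} on (0,∞) × ℝ (once continuously differentiable in t and twice continuously differentiable in x) and satisfies the PDE ∂v/∂t(t,x) = (1/2)·∂²v/∂x²(t,x) − (1/2)·v(t,x)² for all (t,x) ∈ (0,∞) × ℝ. -/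
/-- The rescaled function `v(t,x) = t⁻¹ · G(t^{-1/2}·x)`. -/
noncomputable def vOf (G : ℝ → ℝ) (t x : ℝ) : ℝ := t⁻¹ * G ((Real.sqrt t)⁻¹ * x)

/-- `v` is C^{1,2} on `(0,∞) × ℝ`: once (continuously) differentiable in `t` and twice
(continuously) differentiable in `x`, with the partial derivatives jointly continuous there. -/
def IsC12 (v : ℝ → ℝ → ℝ) : Prop :=
  (∀ t, 0 < t → ∀ x : ℝ, DifferentiableAt ℝ (fun s => v s x) t) ∧
  (∀ t, 0 < t → ∀ x : ℝ, DifferentiableAt ℝ (fun y => v t y) x) ∧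
  (∀ t, 0 < t → ∀ x : ℝ, DifferentiableAt ℝ (deriv (fun y => v t y)) x) ∧
  ContinuousOn (fun p : ℝ × ℝ => deriv (fun s => v s p.2) p.1) (Set.Ioi 0 ×ˢ Set.univ) ∧
  ContinuousOn (fun p : ℝ × ℝ => deriv (fun y => v p.1 y) p.2) (Set.Ioi 0 ×ˢ Set.univ) ∧
  ContinuousOn (fun p : ℝ × ℝ => deriv (deriv (fun y => v p.1 y)) p.2) (Set.Ioi 0 ×ˢ Set.univ)

variable {G : ℝ → ℝ}

lemma hG1 (hG : ContDiff ℝ 2 G) : ContDiff ℝ 1 (deriv G) := by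
  have h : ContDiff ℝ ((1:ℕ∞)+1) G := by norm_num; exact hG
  exact (contDiff_succ_iff_deriv.mp h).2.2

lemma hdG (hG : ContDiff ℝ 2 G) : Differentiable ℝ G := hG.differentiable (by norm_num)

lemma hdG' (hG : ContDiff ℝ 2 G) : Differentiable ℝ (deriv G) :=
  (hG1 hG).differentiable (by norm_num)

lemma hcG'' (hG : ContDiff ℝ 2 G) : Continuous (deriv (deriv G)) := by
  have := contDiff_one_iff_deriv.mp (hG1 hG)
  exact this.2

lemma hx (hG : ContDiff ℝ 2 G) {t : ℝ} (ht : 0 < t) (x : ℝ) :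
    HasDerivAt (fun y => vOf G t y)
      (t⁻¹ * (deriv G ((Real.sqrt t)⁻¹ * x) * (Real.sqrt t)⁻¹)) x := by
  have h1 : HasDerivAt (fun y : ℝ => (Real.sqrt t)⁻¹ * y) ((Real.sqrt t)⁻¹) x := by
    simpa using (hasDerivAt_id x).const_mul (Real.sqrt t)⁻¹
  have h2 : HasDerivAt G (deriv G ((Real.sqrt t)⁻¹ * x)) ((Real.sqrt t)⁻¹ * x) :=
    (hdG hG ((Real.sqrt t)⁻¹ * x)).hasDerivAt
  exact (h2.comp x h1).const_mul t⁻¹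

lemma derivx_eq (hG : ContDiff ℝ 2 G) {t : ℝ} (ht : 0 < t) :
    deriv (fun y => vOf G t y)
      = fun x => t⁻¹ * (deriv G ((Real.sqrt t)⁻¹ * x) * (Real.sqrt t)⁻¹) := by
  funext x
  exact (hx hG ht x).deriv

lemma hxx (hG : ContDiff ℝ 2 G) {t : ℝ} (ht : 0 < t) (x : ℝ) :
    HasDerivAt (deriv (fun y => vOf G t y))
      (t⁻¹ * (deriv (deriv G) ((Real.sqrt t)⁻¹ * x) * (Real.sqrt t)⁻¹ * (Real.sqrt t)⁻¹)) x := by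
  rw [derivx_eq hG ht]
  have h1 : HasDerivAt (fun y : ℝ => (Real.sqrt t)⁻¹ * y) ((Real.sqrt t)⁻¹) x := by
    simpa using (hasDerivAt_id x).const_mul (Real.sqrt t)⁻¹
  have h2 : HasDerivAt (deriv G) (deriv (deriv G) ((Real.sqrt t)⁻¹ * x)) ((Real.sqrt t)⁻¹ * x) :=
    (hdG' hG ((Real.sqrt t)⁻¹ * x)).hasDerivAt
  have h3 := ((h2.comp x h1).mul_const (Real.sqrt t)⁻¹).const_mul t⁻¹
  exact h3

lemma ht' (hG : ContDiff ℝ 2 G) {t : ℝ} (ht : 0 < t) (x : ℝ) :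
    HasDerivAt (fun s => vOf G s x)
      (-(t^2)⁻¹ * G ((Real.sqrt t)⁻¹ * x)
        + t⁻¹ * (deriv G ((Real.sqrt t)⁻¹ * x) * (-(1/(2*Real.sqrt t)) / (Real.sqrt t)^2 * x))) t := by
  have hst : Real.sqrt t ≠ 0 := by positivity
  have h1 : HasDerivAt (fun s : ℝ => Real.sqrt s) (1/(2*Real.sqrt t)) t :=
    Real.hasDerivAt_sqrt (ne_of_gt ht)
  have h2 : HasDerivAt (fun s : ℝ => (Real.sqrt s)⁻¹)
      (-(1/(2*Real.sqrt t)) / (Real.sqrt t)^2) t := h1.inv hst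
  have h3 := h2.mul_const x
  have h4 : HasDerivAt G (deriv G ((Real.sqrt t)⁻¹ * x)) ((Real.sqrt t)⁻¹ * x) :=
    (hdG hG ((Real.sqrt t)⁻¹ * x)).hasDerivAt
  have h5 := h4.comp t h3
  have h6 : HasDerivAt (fun s : ℝ => s⁻¹) (-(t^2)⁻¹) t := hasDerivAt_inv (ne_of_gt ht)
  have h7 := h6.mul h5
  exact h7

lemma pde (hG : ContDiff ℝ 2 G)
    (hODE : ∀ x : ℝ,
      (1/2) * deriv (deriv G) x + (x/2) * deriv G x + G x - (1/2) * (G x)^2 = 0)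
    {t : ℝ} (ht : 0 < t) (x : ℝ) :
    deriv (fun s => vOf G s x) t
      = (1/2) * deriv (deriv (fun y => vOf G t y)) x - (1/2) * (vOf G t x)^2 := by
  rw [(ht' hG ht x).deriv, (hxx hG ht x).deriv]
  set s := Real.sqrt t with hsdef
  have hs0 : s ≠ 0 := by positivity
  have hts : s * s = t := Real.mul_self_sqrt ht.le
  have hG'' : deriv (deriv G) (s⁻¹ * x)
      = (G (s⁻¹*x))^2 - 2*G (s⁻¹*x) - (s⁻¹*x) * deriv G (s⁻¹*x) := by
    have := hODE (s⁻¹ * x); nlinarith [this]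
  rw [← hts, hG'']
  simp only [vOf, ← hts]
  field_simp
  rw [Real.sqrt_sq (Real.sqrt_nonneg t)]
  ring

lemma contAux (hG : ContDiff ℝ 2 G) :
    ContinuousOn (fun p : ℝ × ℝ => deriv (fun s => vOf G s p.2) p.1) (Set.Ioi 0 ×ˢ Set.univ) ∧
    ContinuousOn (fun p : ℝ × ℝ => deriv (fun y => vOf G p.1 y) p.2) (Set.Ioi 0 ×ˢ Set.univ) ∧
    ContinuousOn (fun p : ℝ × ℝ => deriv (deriv (fun y => vOf G p.1 y)) p.2)
      (Set.Ioi 0 ×ˢ Set.univ) := by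
  set S : Set (ℝ × ℝ) := Set.Ioi 0 ×ˢ Set.univ with hS
  have hpos : ∀ p ∈ S, (0:ℝ) < p.1 := by
    intro p hp; exact (Set.mem_prod.mp hp).1
  have h1ne : ∀ p ∈ S, p.1 ≠ 0 := fun p hp => ne_of_gt (hpos p hp)
  have hsne : ∀ p ∈ S, Real.sqrt p.1 ≠ 0 := by
    intro p hp; have := hpos p hp; positivity
  have cfst : ContinuousOn (fun p : ℝ × ℝ => p.1) S := continuous_fst.continuousOn
  have csnd : ContinuousOn (fun p : ℝ × ℝ => p.2) S := continuous_snd.continuousOn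
  have cinv1 : ContinuousOn (fun p : ℝ × ℝ => p.1⁻¹) S := cfst.inv₀ h1ne
  have csqrt : ContinuousOn (fun p : ℝ × ℝ => Real.sqrt p.1) S :=
    (Real.continuous_sqrt.comp continuous_fst).continuousOn
  have cinvs : ContinuousOn (fun p : ℝ × ℝ => (Real.sqrt p.1)⁻¹) S := csqrt.inv₀ hsne
  have cy : ContinuousOn (fun p : ℝ × ℝ => (Real.sqrt p.1)⁻¹ * p.2) S := cinvs.mul csnd
  have cG : ContinuousOn (fun p : ℝ × ℝ => G ((Real.sqrt p.1)⁻¹ * p.2)) S :=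
    (hdG hG).continuous.comp_continuousOn cy
  have cG' : ContinuousOn (fun p : ℝ × ℝ => deriv G ((Real.sqrt p.1)⁻¹ * p.2)) S :=
    (hdG' hG).continuous.comp_continuousOn cy
  have cG'' : ContinuousOn (fun p : ℝ × ℝ => deriv (deriv G) ((Real.sqrt p.1)⁻¹ * p.2)) S :=
    (hcG'' hG).comp_continuousOn cy
  have c2s : ContinuousOn (fun p : ℝ×ℝ => 2*Real.sqrt p.1) S := continuousOn_const.mul csqrt
  have cnum : ContinuousOn (fun p : ℝ×ℝ => -(1/(2*Real.sqrt p.1))) S :=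
    (continuousOn_const.div c2s (fun p hp => by have := hpos p hp; positivity)).neg
  have cfrac : ContinuousOn
      (fun p : ℝ×ℝ => -(1/(2*Real.sqrt p.1)) / (Real.sqrt p.1)^2) S :=
    cnum.div (csqrt.pow 2) (fun p hp => pow_ne_zero 2 (hsne p hp))
  have cinvsq : ContinuousOn (fun p : ℝ×ℝ => -(p.1^2)⁻¹) S :=
    ((cfst.pow 2).inv₀ (fun p hp => pow_ne_zero 2 (h1ne p hp))).neg
  refine ⟨?_, ?_, ?_⟩
  · have cexp : ContinuousOn (fun p : ℝ × ℝ =>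
        -(p.1^2)⁻¹ * G ((Real.sqrt p.1)⁻¹ * p.2)
          + p.1⁻¹ * (deriv G ((Real.sqrt p.1)⁻¹ * p.2)
            * (-(1/(2*Real.sqrt p.1)) / (Real.sqrt p.1)^2 * p.2))) S :=
      (cinvsq.mul cG).add (cinv1.mul (cG'.mul (cfrac.mul csnd)))
    refine cexp.congr ?_
    intro p hp
    exact ((ht' hG (hpos p hp) p.2).deriv)
  · have cexp : ContinuousOn (fun p : ℝ × ℝ =>
        p.1⁻¹ * (deriv G ((Real.sqrt p.1)⁻¹ * p.2) * (Real.sqrt p.1)⁻¹)) S :=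
      cinv1.mul (cG'.mul cinvs)
    refine cexp.congr ?_
    intro p hp
    exact (hx hG (hpos p hp) p.2).deriv
  · have cexp : ContinuousOn (fun p : ℝ × ℝ =>
        p.1⁻¹ * (deriv (deriv G) ((Real.sqrt p.1)⁻¹ * p.2) * (Real.sqrt p.1)⁻¹ * (Real.sqrt p.1)⁻¹)) S :=
      cinv1.mul ((cG''.mul cinvs).mul cinvs)
    refine cexp.congr ?_
    intro p hp
    exact (hxx hG (hpos p hp) p.2).deriv

theorem stmt0 (G : ℝ → ℝ) (hG : ContDiff ℝ 2 G)
    (hODE : ∀ x : ℝ,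
      (1/2) * deriv (deriv G) x + (x/2) * deriv G x + G x - (1/2) * (G x)^2 = 0) :
    IsC12 (vOf G) ∧
    ∀ t, 0 < t → ∀ x : ℝ,
      deriv (fun s => vOf G s x) t
        = (1/2) * deriv (deriv (fun y => vOf G t y)) x - (1/2) * (vOf G t x)^2 := by
  obtain ⟨c1, c2, c3⟩ := contAux hG
  exact ⟨⟨fun t ht x => (ht' hG ht x).differentiableAt,
    fun t ht x => (hx hG ht x).differentiableAt,
    fun t ht x => (hxx hG ht x).differentiableAt,
    c1, c2, c3⟩, fun t ht x => pde hG hODE ht x⟩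
end

section
/- There is at most one positive C² solution of the ODE with the stated boundary conditions: if G, H : ℝ → ℝ are twice continuously differentiable, G(x) > 0 and H(x) > 0 for all x, both satisfy the ODE (1/2)·G''(x) + (x/2)·G'(x) + G(x) − (1/2)·G(x)² = 0 for all x ∈ ℝ, and both satisfy lim_{x→∞} x²·G(x) = 0 and lim_{x→−∞} G(x) = 2 (and the same two limits for H), then G = H. -/
open Filter

open Real Set

/-- Once above a barrier with strictly inward derivative at touching points, stay above. -/
lemma persist {f b : ℝ → ℝ} {a : ℝ}
    (hf : ∀ x ∈ Ici a, DifferentiableAt ℝ f x)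
    (hb : ∀ x ∈ Ici a, DifferentiableAt ℝ b x)
    (h0 : b a ≤ f a)
    (hkey : ∀ x, a ≤ x → f x = b x → deriv b x < deriv f x) :
    ∀ x, a ≤ x → b x ≤ f x := by
  intro y hy
  by_contra hlt
  push_neg at hlt
  set g : ℝ → ℝ := fun x => f x - b x with hg
  have hgd : ∀ x ∈ Ici a, DifferentiableAt ℝ g x := fun x hx => (hf x hx).sub (hb x hx)
  have hgc : ContinuousOn g (Icc a y) := fun x hx =>
    (hgd x (Icc_subset_Ici_self hx)).continuousAt.continuousWithinAt
  have hay : a < y := by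
    rcases lt_or_eq_of_le hy with h | h
    · exact h
    · exfalso; rw [← h] at hlt; have : g a < 0 := by simp only [hg]; linarith
      simp only [hg] at this; linarith
  set S : Set ℝ := Icc a y ∩ g ⁻¹' (Ici 0) with hS
  have hSne : S.Nonempty := ⟨a, ⟨le_refl a, le_of_lt hay⟩, by simp [hg]; linarith⟩
  have hSbdd : BddAbove S := ⟨y, fun x hx => hx.1.2⟩
  have hSclosed : IsClosed S := hgc.preimage_isClosed_of_isClosed isClosed_Icc isClosed_Ici
  set z := sSup S with hz
  have hzS : z ∈ S := hSclosed.csSup_mem hSne hSbdd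
  have hza : a ≤ z := hzS.1.1
  have hzy : z ≤ y := hzS.1.2
  have hgz : 0 ≤ g z := hzS.2
  have hzy' : z < y := by
    rcases lt_or_eq_of_le hzy with h | h
    · exact h
    · exfalso; rw [h] at hgz; simp only [hg] at hgz; linarith
  have hnot : ∀ t, z < t → t ≤ y → g t < 0 := by
    intro t hzt hty
    by_contra hc
    push_neg at hc
    have ht : t ∈ S := ⟨⟨le_trans hza (le_of_lt hzt), hty⟩, hc⟩
    have := le_csSup hSbdd ht
    linarith
  have hgz0 : g z = 0 := by
    rcases lt_or_eq_of_le hgz with h | h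
    · exfalso
      have hcont : ContinuousAt g z := (hgd z hza).continuousAt
      have hev : ∀ᶠ t in nhds z, 0 < g t := hcont (Ioi_mem_nhds h)
      have hev2 : ∀ᶠ t in nhdsWithin z (Ioi z), 0 < g t := hev.filter_mono nhdsWithin_le_nhds
      have hev3 : ∀ᶠ t in nhdsWithin z (Ioi z), t < y := by
        have : Ioo z y ∈ nhdsWithin z (Ioi z) := Ioo_mem_nhdsGT_of_mem ⟨le_refl z, hzy'⟩
        exact Filter.eventually_of_mem this (fun t ht => ht.2)
      have hev4 : ∀ᶠ t in nhdsWithin z (Ioi z), z < t := eventually_mem_nhdsWithin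
      rcases ((hev2.and hev3).and hev4).exists with ⟨t, ⟨ht1, ht2⟩, ht3⟩
      exact absurd ht1 (not_lt.mpr (le_of_lt (hnot t ht3 (le_of_lt ht2))))
    · exact h.symm
  -- derivative positive at z
  have hfz : f z = b z := by simp only [hg] at hgz0; linarith
  have hder : 0 < deriv g z := by
    have : deriv g z = deriv f z - deriv b z := deriv_sub (hf z hza) (hb z hza)
    rw [this]
    have := hkey z hza hfz
    linarith
  have hslope : Tendsto (slope g z) (nhdsWithin z {z}ᶜ) (nhds (deriv g z)) :=
    hasDerivAt_iff_tendsto_slope.mp ((hgd z hza).hasDerivAt)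
  have hslope2 : ∀ᶠ t in nhdsWithin z (Ioi z), 0 < slope g z t := by
    have h1 : ∀ᶠ t in nhdsWithin z {z}ᶜ, 0 < slope g z t := hslope (Ioi_mem_nhds hder)
    exact h1.filter_mono (nhdsWithin_mono z (fun t ht => ne_of_gt ht))
  have hev3 : ∀ᶠ t in nhdsWithin z (Ioi z), t < y := by
    have : Ioo z y ∈ nhdsWithin z (Ioi z) := Ioo_mem_nhdsGT_of_mem ⟨le_refl z, hzy'⟩
    exact Filter.eventually_of_mem this (fun t ht => ht.2)
  have hev4 : ∀ᶠ t in nhdsWithin z (Ioi z), z < t := eventually_mem_nhdsWithin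
  rcases ((hslope2.and hev3).and hev4).exists with ⟨t, ⟨hs, hty⟩, hzt⟩
  have : g t < 0 := hnot t hzt (le_of_lt hty)
  rw [slope_def_field, hgz0, sub_zero] at hs
  rcases div_pos_iff.mp hs with ⟨h5, h6⟩ | ⟨h5, h6⟩
  · linarith
  · linarith [sub_pos.mpr hzt]

/-- Linear lower growth from a derivative lower bound. -/
lemma grow {f : ℝ → ℝ} {a c : ℝ}
    (hf : ∀ x ∈ Ici a, DifferentiableAt ℝ f x)
    (hd : ∀ x ∈ Ici a, c ≤ deriv f x) :
    ∀ x, a ≤ x → f a + c * (x - a) ≤ f x := by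
  intro x hx
  set g : ℝ → ℝ := fun t => f t - c * t with hg
  have hgd : ∀ t ∈ Ici a, HasDerivAt g (deriv f t - c) t := by
    intro t ht
    have h1 : HasDerivAt (fun t : ℝ => c * t) (c * 1) t := (hasDerivAt_id t).const_mul c
    have h2 := (hf t ht).hasDerivAt.sub h1
    simp only [mul_one] at h2
    exact h2
  have hmono : MonotoneOn g (Ici a) := by
    apply monotoneOn_of_deriv_nonneg (convex_Ici a)
    · exact fun t ht => (hgd t ht).differentiableAt.continuousAt.continuousWithinAt
    · intro t ht
      rw [interior_Ici] at ht
      exact (hgd t (mem_Ici.mpr (le_of_lt (mem_Ioi.mp ht)))).differentiableAt.differentiableWithinAt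
    · intro t ht
      rw [interior_Ici] at ht
      rw [(hgd t (mem_Ici.mpr (le_of_lt (mem_Ioi.mp ht)))).deriv]
      have := hd t (mem_Ici.mpr (le_of_lt (mem_Ioi.mp ht)))
      linarith
  have := hmono (mem_Ici.mpr (le_refl a)) (mem_Ici.mpr hx) hx
  simp only [hg] at this
  linarith

/-- Linear upper decay from a derivative upper bound. -/
lemma decay {f : ℝ → ℝ} {a c : ℝ}
    (hf : ∀ x ∈ Ici a, DifferentiableAt ℝ f x)
    (hd : ∀ x ∈ Ici a, deriv f x ≤ c) :
    ∀ x, a ≤ x → f x ≤ f a + c * (x - a) := by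
  intro x hx
  have hf' : ∀ y ∈ Ici a, DifferentiableAt ℝ (fun t => -f t) y := fun y hy => (hf y hy).neg
  have hd' : ∀ y ∈ Ici a, -c ≤ deriv (fun t => -f t) y := by
    intro y hy
    have : deriv (fun t => -f t) y = -deriv f y := by
      simpa using deriv.neg (f := f) (x := y)
    rw [this]
    have := hd y hy; linarith
  have := grow hf' hd' x hx
  linarith
lemma aux_div (A B C : ℝ) (hB : B ≠ 0) : C - (A/B)^2 = (C*B*B - A*A)/B^2 := by
  field_simp

lemma aux_n (g nn x : ℝ) (hx : x ≠ 0) :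
    g - 6/x^2 - nn*(x - 4/x + nn) =
      (x^2/4 - 3/2 + g - (nn + x/2 - 2/x)^2) - 1/2 + -(2/x^2) := by
  field_simp; ring

set_option maxHeartbeats 1000000 in
lemma gauss (G : ℝ → ℝ) (hGd : Differentiable ℝ G) (hGd2 : Differentiable ℝ (deriv G))
    (hGpos : ∀ x, 0 < G x)
    (hODE : ∀ x : ℝ, deriv (deriv G) x = -(x * deriv G x) - 2 * G x + (G x)^2)
    (hGtop : Tendsto (fun x : ℝ => x^2 * G x) atTop (nhds 0)) :
    ∀ x, 10 ≤ x → G x ≤ (Real.exp 25 * G 10) * Real.exp (-(x^2/4)) := by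
  set u : ℝ → ℝ := fun x => Real.exp (x^2/4) * G x with hu_def
  set u₁ : ℝ → ℝ := fun x => Real.exp (x^2/4) * (x/2 * G x + deriv G x) with hu1_def
  clear_value u u₁
  have hexp : ∀ x : ℝ, HasDerivAt (fun y : ℝ => Real.exp (y^2/4)) (Real.exp (x^2/4) * (x/2)) x := by
    intro x
    have hq : HasDerivAt (fun y : ℝ => y^2/4) (x/2) x := by
      have := (hasDerivAt_pow 2 x).div_const 4
      refine this.congr_deriv ?_; simp; ring
    exact (Real.hasDerivAt_exp (x^2/4)).comp x hq
  have hu : ∀ x, HasDerivAt u (u₁ x) x := by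
    intro x
    have h := (hexp x).mul (hGd x).hasDerivAt
    refine (show HasDerivAt u _ x by rw [hu_def]; exact h).congr_deriv ?_
    simp only [hu1_def]; ring
  have hupos : ∀ x, 0 < u x := by
    intro x; rw [hu_def]; exact mul_pos (Real.exp_pos _) (hGpos x)
  have hu1 : ∀ x, HasDerivAt u₁ ((x^2/4 - 3/2 + G x) * u x) x := by
    intro x
    have hin : HasDerivAt (fun y => y/2 * G y + deriv G y)
        (1/2 * G x + x/2 * deriv G x + deriv (deriv G) x) x := by
      have h1 : HasDerivAt (fun y : ℝ => y/2) (1/2) x := (hasDerivAt_id x).div_const 2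
      have h2 := (h1.mul (hGd x).hasDerivAt).add (hGd2 x).hasDerivAt
      first
      | exact h2
      | (convert h2 using 1; ring)
    have h := (hexp x).mul hin
    rw [hODE x] at h
    refine (show HasDerivAt u₁ _ x by rw [hu1_def]; exact h).congr_deriv ?_
    simp only [hu1_def, hu_def]; ring
  -- main claim: u₁ ≤ 0 on [10, ∞)
  have key : ∀ x, 10 ≤ x → u₁ x ≤ 0 := by
    by_contra hcon
    push_neg at hcon
    obtain ⟨x₅, hx₅10, hx₅pos⟩ := hcon
    -- u₁ is positive from x₅ on
    have hu1d : ∀ t ∈ Ici x₅, DifferentiableAt ℝ u₁ t := fun t _ => (hu1 t).differentiableAt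
    have hu1deriv : ∀ t ∈ Ici x₅, (0:ℝ) ≤ deriv u₁ t := by
      intro t ht
      rw [(hu1 t).deriv]
      have h10 : (10:ℝ) ≤ t := le_trans hx₅10 ht
      have h1 := hupos t; have h2 := hGpos t
      nlinarith [mul_pos (show (0:ℝ) < t^2/4 - 3/2 + G t by nlinarith) h1]
    have hu1pos : ∀ x, x₅ ≤ x → 0 < u₁ x := by
      intro x hx
      have := grow hu1d hu1deriv x hx
      linarith
    set m : ℝ → ℝ := fun x => u₁ x / u x with hm_def
    clear_value m
    have hm : ∀ x, HasDerivAt m (x^2/4 - 3/2 + G x - (m x)^2) x := by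
      intro x
      have h := (hu1 x).div (hu x) (ne_of_gt (hupos x))
      refine (show HasDerivAt m _ x by rw [hm_def]; exact h).congr_deriv ?_
      simp only [hm_def]
      exact (aux_div (u₁ x) (u x) _ (ne_of_gt (hupos x))).symm
    have hmpos : ∀ x, x₅ ≤ x → 0 < m x := by
      intro x hx; rw [hm_def]; exact div_pos (hu1pos x hx) (hupos x)
    set n : ℝ → ℝ := fun x => m x - x/2 + 2/x with hn_def
    clear_value n
    have hn : ∀ x : ℝ, 0 < x → HasDerivAt n (G x - 6/x^2 - n x * (x - 4/x + n x)) x := by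
      intro x hx
      have h2 : HasDerivAt (fun y : ℝ => 2/y) (-(2/x^2)) x := by
        have h := (hasDerivAt_inv (ne_of_gt hx)).const_mul (2:ℝ)
        simp only [div_eq_mul_inv]
        refine h.congr_deriv ?_
        rw [sq]; field_simp
      have h := ((hm x).sub ((hasDerivAt_id x).div_const 2)).add h2
      have hmx : m x = n x + x/2 - 2/x := by simp only [hn_def]; ring
      refine (show HasDerivAt n _ x by rw [hn_def]; exact h).congr_deriv ?_
      rw [hmx]
      exact (aux_n (G x) (n x) x (ne_of_gt hx)).symm
    have hnd : ∀ x : ℝ, 0 < x → DifferentiableAt ℝ n x := fun x hx => (hn x hx).differentiableAt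
    have hnlow : ∀ x, x₅ ≤ x → -(x/2) + 2/x < n x := by
      intro x hx
      have := hmpos x hx
      simp only [hn_def] at this ⊢
      nlinarith
    -- B1: reach n ≥ -1
    have hB1 : ∃ x₆, x₅ ≤ x₆ ∧ -1 ≤ n x₆ := by
      by_contra hB
      push_neg at hB
      have hd3 : ∀ x ∈ Ici x₅, (3:ℝ) ≤ deriv n x := by
        intro x hx
        have hx10 : (10:ℝ) ≤ x := le_trans hx₅10 hx
        have hxpos : (0:ℝ) < x := by linarith
        rw [(hn x hxpos).deriv]
        have h1 := hB x hx
        have h2 := hnlow x hx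
        have h3 := hGpos x
        have i0 : (0:ℝ) < 2/x := by positivity
        have i1 : 2/x ≤ 1/5 := by rw [div_le_div_iff₀ hxpos (by norm_num)]; linarith
        have i2 : 4/x ≤ 2/5 := by rw [div_le_div_iff₀ hxpos (by norm_num)]; linarith
        have i3 : 6/x^2 ≤ 3/50 := by
          rw [div_le_div_iff₀ (pow_pos hxpos 2) (by norm_num)]; nlinarith
        nlinarith [mul_nonneg (show (0:ℝ) ≤ -n x - 1 by linarith)
          (show (0:ℝ) ≤ x - 4/x + n x by linarith)]
      have hndIci : ∀ t ∈ Ici x₅, DifferentiableAt ℝ n t :=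
        fun t ht => hnd t (by have := le_trans hx₅10 ht; linarith)
      have hgr := grow hndIci hd3
      have hx' : x₅ ≤ x₅ + (-1 - n x₅) := by
        have := hB x₅ (le_refl x₅); linarith
      have h4 := hgr (x₅ + (-1 - n x₅)) hx'
      have h5 := hB (x₅ + (-1 - n x₅)) hx'
      have hnx₅ := hB x₅ (le_refl x₅)
      nlinarith
    obtain ⟨x₆, hx₆5, hx₆n⟩ := hB1
    have hx₆10 : (10:ℝ) ≤ x₆ := le_trans hx₅10 hx₆5
    -- B2: persist n ≥ -1
    have hB2 : ∀ x, x₆ ≤ x → -1 ≤ n x := by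
      have hkey : ∀ x, x₆ ≤ x → n x = (fun _ : ℝ => (-1:ℝ)) x →
          deriv (fun _ : ℝ => (-1:ℝ)) x < deriv n x := by
        intro x hx hfx
        simp only at hfx
        have hx10 : (10:ℝ) ≤ x := le_trans hx₆10 hx
        have hxpos : (0:ℝ) < x := by linarith
        rw [(hn x hxpos).deriv, deriv_const, hfx]
        have h3 := hGpos x
        have i0 : (0:ℝ) < 4/x := by positivity
        have i1 : 4/x ≤ 2/5 := by rw [div_le_div_iff₀ hxpos (by norm_num)]; linarith
        have i2 : 6/x^2 ≤ 3/50 := by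
          rw [div_le_div_iff₀ (pow_pos hxpos 2) (by norm_num)]; nlinarith
        nlinarith
      exact persist (fun x hx => hnd x (by have : x₆ ≤ x := hx; linarith))
        (fun x _ => differentiableAt_const _) hx₆n hkey
    -- B3: reach n ≥ -8/x^3
    have hB3 : ∃ x₇, x₆ ≤ x₇ ∧ -8/x₇^3 ≤ n x₇ := by
      by_contra hB
      push_neg at hB
      set L : ℝ → ℝ := fun x => Real.log (-n x) + x^2/40 with hL_def
      clear_value L
      have hnneg : ∀ x, x₆ ≤ x → 0 < -n x := by
        intro x hx
        have h1 := hB x hx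
        have hxpos : (0:ℝ) < x := by have := le_trans hx₆10 hx; linarith
        have h9 : -8/x^3 < 0 := div_neg_of_neg_of_pos (by norm_num) (pow_pos hxpos 3)
        linarith
      have hLd : ∀ x, x₆ ≤ x →
          HasDerivAt L (-(G x - 6/x^2 - n x * (x - 4/x + n x))/(-n x) + x/20) x := by
        intro x hx
        have hxpos : (0:ℝ) < x := by have := le_trans hx₆10 hx; linarith
        have h1 := ((hn x hxpos).neg).log (ne_of_gt (hnneg x hx))
        have h2 : HasDerivAt (fun y : ℝ => y^2/40) (x/20) x := by
          have := (hasDerivAt_pow 2 x).div_const 40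
          refine this.congr_deriv ?_; simp; ring
        have h3 := h1.add h2
        rw [hL_def]
        first
        | exact h3
        | (convert h3 using 1; ring)
      have hLderiv : ∀ x ∈ Ici x₆, deriv L x ≤ 0 := by
        intro x hx
        have hx' : x₆ ≤ x := hx
        have hx10 : (10:ℝ) ≤ x := le_trans hx₆10 hx'
        have hxpos : (0:ℝ) < x := by linarith
        rw [(hLd x hx').deriv]
        set z := -n x with hz_def
        clear_value z
        have hzpos : 0 < z := by rw [hz_def]; exact hnneg x hx'
        have hz1 : z ≤ 1 := by have := hB2 x hx'; simp only [hz_def]; linarith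
        have hz8 : 8/x^3 < z := by
          have h1 := hB x hx'
          rw [neg_div] at h1
          simp only [hz_def]; linarith
        have hval : G x - 6/x^2 - n x * (x - 4/x + n x) = G x - 6/x^2 + z*(x - 4/x - z) := by
          simp only [hz_def]; ring
        rw [hval]
        have e1 : 8/x^3 * (3*x/4) = 6/x^2 := by field_simp; ring
        have e2 : (0:ℝ) < 3*x/4 := by linarith
        have i1 : 4/x ≤ 2/5 := by rw [div_le_div_iff₀ hxpos (by norm_num)]; linarith
        have e3 : 3*x/4 ≤ x - 4/x - z - x/20 := by linarith
        have e4 : 6/x^2 < z*(x - 4/x - z - x/20) := by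
          calc 6/x^2 = 8/x^3*(3*x/4) := e1.symm
          _ < z*(3*x/4) := by exact mul_lt_mul_of_pos_right hz8 e2
          _ ≤ z*(x - 4/x - z - x/20) := by
              exact mul_le_mul_of_nonneg_left e3 (le_of_lt hzpos)
        have e5 : (x/20)*z < G x - 6/x^2 + z*(x - 4/x - z) := by nlinarith [e4, hGpos x]
        have e6 : x/20 ≤ (G x - 6/x^2 + z*(x - 4/x - z))/z := by
          rw [le_div_iff₀ hzpos]; nlinarith [e5]
        have e7 : -(G x - 6/x^2 + z*(x - 4/x - z))/z = -((G x - 6/x^2 + z*(x - 4/x - z))/z) := by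
          ring
        rw [e7]
        linarith
      have hLdiff : ∀ x ∈ Ici x₆, DifferentiableAt ℝ L x :=
        fun x hx => (hLd x hx).differentiableAt
      have hdec := decay hLdiff hLderiv
      set K := L x₆ with hK_def
      clear_value K
      have hlow : ∀ x, x₆ ≤ x → -3*x + x^2/40 ≤ K := by
        intro x hx
        have hx10 : (10:ℝ) ≤ x := le_trans hx₆10 hx
        have hxpos : (0:ℝ) < x := by linarith
        have hneg : -8/x^3 < 0 := div_neg_of_neg_of_pos (by norm_num) (pow_pos hxpos 3)
        have h1 : 8/x^3 ≤ -n x := by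
          have hh := hB x hx
          rw [neg_div] at hh
          linarith
        have h0 : 0 < -n x := by
          have hh := hB x hx
          linarith
        have h2 : Real.log (8/x^3) ≤ Real.log (-n x) :=
          (Real.log_le_log_iff (div_pos (by norm_num) (pow_pos hxpos 3)) h0).mpr h1
        have h3 : Real.log (8/x^3) = Real.log 8 - 3*Real.log x := by
          rw [Real.log_div (by norm_num) (pow_ne_zero 3 (ne_of_gt hxpos)), Real.log_pow]
          push_cast; ring
        have h4 : (0:ℝ) ≤ Real.log 8 := Real.log_nonneg (by norm_num)
        have h5 : Real.log x ≤ x := Real.log_le_self (le_of_lt hxpos)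
        have h6 := hdec x hx
        simp only [hL_def] at h6
        have h7 : -3*x ≤ Real.log (-n x) := by linarith
        linarith
      set M := max K 0 with hM_def
      clear_value M
      have hM0 : (0:ℝ) ≤ M := by rw [hM_def]; exact le_max_right _ _
      have hMK : K ≤ M := by rw [hM_def]; exact le_max_left _ _
      set xx := max x₆ (160 + 40*M) with hxx_def
      clear_value xx
      have hxx1 : x₆ ≤ xx := by rw [hxx_def]; exact le_max_left _ _
      have hxx2 : 160 + 40*M ≤ xx := by rw [hxx_def]; exact le_max_right _ _
      have hfin := hlow xx hxx1
      have hxx0 : (0:ℝ) ≤ xx := by linarith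
      linarith [mul_le_mul_of_nonneg_right hxx2 hxx0,
        mul_nonneg hM0 (show (0:ℝ) ≤ xx - 1 by linarith)]
    obtain ⟨x₇, hx₇6, hx₇n⟩ := hB3
    have hx₇10 : (10:ℝ) ≤ x₇ := le_trans hx₆10 hx₇6
    -- B4: persist n ≥ -8/x^3
    have hbder : ∀ x : ℝ, 0 < x → HasDerivAt (fun y : ℝ => -8/y^3) (24/x^4) x := by
      intro x hx
      have h1 : HasDerivAt (fun y : ℝ => y^3) (3*x^2) x := by
        have h0 := hasDerivAt_pow 3 x
        first
        | exact h0
        | (refine h0.congr_deriv ?_; push_cast; try ring)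
      have h2 := (h1.inv (pow_ne_zero 3 (ne_of_gt hx))).const_mul (-8 : ℝ)
      simp only [div_eq_mul_inv]
      refine h2.congr_deriv ?_
      field_simp
      try ring
    have hB4 : ∀ x, x₇ ≤ x → -8/x^3 ≤ n x := by
      have hkey : ∀ x, x₇ ≤ x → n x = (fun y : ℝ => -8/y^3) x →
          deriv (fun y : ℝ => -8/y^3) x < deriv n x := by
        intro x hx hfx
        simp only at hfx
        have hx10 : (10:ℝ) ≤ x := le_trans hx₇10 hx
        have hxpos : (0:ℝ) < x := by linarith
        rw [(hn x hxpos).deriv, (hbder x hxpos).deriv, hfx]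
        have hE : G x - 6/x^2 - (-8/x^3) * (x - 4/x + (-8/x^3)) - 24/x^4 =
            G x + (2*x^4 - 56*x^2 - 64)/x^6 := by
          field_simp
          ring
        have hx2 : (100:ℝ) ≤ x^2 := by
          nlinarith [mul_nonneg (show (0:ℝ) ≤ x - 10 by linarith) (show (0:ℝ) ≤ x + 10 by linarith)]
        have hpoly : (0:ℝ) ≤ 2*x^4 - 56*x^2 - 64 := by
          nlinarith [mul_le_mul_of_nonneg_left hx2 (show (0:ℝ) ≤ 2*x^2 by positivity)]
        have hquot : (0:ℝ) ≤ (2*x^4 - 56*x^2 - 64)/x^6 := div_nonneg hpoly (by positivity)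
        linarith [hE, hquot, hGpos x]
      intro x hx
      exact persist
        (fun y hy => hnd y (by have : x₇ ≤ y := hy; linarith))
        (fun y hy => (hbder y (by have : x₇ ≤ y := hy; linarith)).differentiableAt)
        hx₇n hkey x hx
    -- B5: integrate, contradict hGtop
    set F : ℝ → ℝ := fun x => Real.log (u x) - x^2/4 + 2*Real.log x - 4/x^2 with hF_def
    clear_value F
    have hFd : ∀ x : ℝ, 0 < x → HasDerivAt F (n x + 8/x^3) x := by
      intro x hx
      have h1 := (hu x).log (ne_of_gt (hupos x))
      have h2 : HasDerivAt (fun y : ℝ => y^2/4) (x/2) x := by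
        have := (hasDerivAt_pow 2 x).div_const 4
        refine this.congr_deriv ?_; simp; ring
      have h3 := (Real.hasDerivAt_log (ne_of_gt hx)).const_mul (2:ℝ)
      have h4 : HasDerivAt (fun y : ℝ => 4/y^2) (-(8/x^3)) x := by
        have hp : HasDerivAt (fun y : ℝ => y^2) (2*x) x := by
          have h0 := hasDerivAt_pow 2 x
          first
          | exact h0
          | (refine h0.congr_deriv ?_; push_cast; try ring)
        have h5 := (hp.inv (pow_ne_zero 2 (ne_of_gt hx))).const_mul (4:ℝ)
        simp only [div_eq_mul_inv]
        refine h5.congr_deriv ?_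
        field_simp
        ring
      have h6 := ((h1.sub h2).add h3).sub h4
      refine (show HasDerivAt F _ x by rw [hF_def]; exact h6).congr_deriv ?_
      simp only [hn_def, hm_def]
      ring
    have hFderiv : ∀ x ∈ Ici x₇, (0:ℝ) ≤ deriv F x := by
      intro x hx
      have hx' : x₇ ≤ x := hx
      have hxpos : (0:ℝ) < x := by linarith
      rw [(hFd x hxpos).deriv]
      have hthis := hB4 x hx'
      rw [neg_div] at hthis
      linarith
    have hgrF := grow (fun x hx => (hFd x (by have : x₇ ≤ x := hx; linarith)).differentiableAt)
      hFderiv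
    have hfinal : ∀ x, x₇ ≤ x → Real.exp (F x₇) ≤ x^2 * G x := by
      intro x hx
      have hxpos : (0:ℝ) < x := by linarith
      have h1 : F x₇ ≤ F x := by have := hgrF x hx; linarith
      have h2 : Real.exp (F x) = x^2 * G x * Real.exp (-(4/x^2)) := by
        have e1 : F x = Real.log (u x) + 2*Real.log x + (-(x^2/4) - 4/x^2) := by
          simp only [hF_def]; ring
        rw [e1, Real.exp_add, Real.exp_add, Real.exp_log (hupos x)]
        have e2 : Real.exp (2*Real.log x) = x^2 := by
          rw [show (2:ℝ)*Real.log x = Real.log (x^2) by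
            rw [Real.log_pow]; push_cast; ring]
          exact Real.exp_log (pow_pos hxpos 2)
        rw [e2]
        simp only [hu_def]
        rw [show Real.exp (x^2/4) * G x * x^2 * Real.exp (-(x^2/4) - 4/x^2)
            = x^2 * G x * (Real.exp (x^2/4) * Real.exp (-(x^2/4) - 4/x^2)) by ring,
          ← Real.exp_add]
        ring_nf
      have h3 : Real.exp (-(4/x^2)) ≤ 1 := by
        rw [show (1:ℝ) = Real.exp 0 by simp]
        apply Real.exp_le_exp.mpr
        have : (0:ℝ) ≤ 4/x^2 := by positivity
        linarith
      have h4 : Real.exp (F x₇) ≤ Real.exp (F x) := Real.exp_le_exp.mpr h1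
      have h5 : (0:ℝ) ≤ x^2 * G x := le_of_lt (mul_pos (pow_pos hxpos 2) (hGpos x))
      nlinarith [mul_le_mul_of_nonneg_left h3 h5]
    have hev : ∀ᶠ x in atTop, x^2 * G x < Real.exp (F x₇) := by
      have hpos : (0:ℝ) < Real.exp (F x₇) := Real.exp_pos _
      exact hGtop.eventually_lt_const hpos
    obtain ⟨x, hx1, hx2⟩ := (hev.and (eventually_ge_atTop x₇)).exists
    have := hfinal x hx2
    linarith
  -- conclude from u₁ ≤ 0 on [10,∞)
  intro x hx
  have hud : ∀ t ∈ Ici (10:ℝ), DifferentiableAt ℝ u t := fun t _ => (hu t).differentiableAt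
  have huderiv : ∀ t ∈ Ici (10:ℝ), deriv u t ≤ 0 := by
    intro t ht
    rw [(hu t).deriv]
    exact key t ht
  have hdec := decay hud huderiv x hx
  have hux : u x ≤ u 10 := by linarith
  have h10 : u 10 = Real.exp 25 * G 10 := by
    simp only [hu_def]; norm_num
  have hexppos : (0:ℝ) < Real.exp (-(x^2/4)) := Real.exp_pos _
  have hGx : G x = u x * Real.exp (-(x^2/4)) := by
    simp only [hu_def]
    rw [mul_comm (Real.exp (x^2/4)) (G x), mul_assoc, ← Real.exp_add]
    norm_num
  rw [hGx, ← h10]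
  exact mul_le_mul_of_nonneg_right hux (le_of_lt hexppos)

set_option maxHeartbeats 1000000 in
lemma auxmain (G H : ℝ → ℝ) (hG : ContDiff ℝ 2 G) (hH : ContDiff ℝ 2 H)
    (hGpos : ∀ x, 0 < G x) (hHpos : ∀ x, 0 < H x)
    (hGODE : ∀ x : ℝ,
      (1/2) * deriv (deriv G) x + (x/2) * deriv G x + G x - (1/2) * (G x)^2 = 0)
    (hHODE : ∀ x : ℝ,
      (1/2) * deriv (deriv H) x + (x/2) * deriv H x + H x - (1/2) * (H x)^2 = 0)
    (hGtop : Tendsto (fun x : ℝ => x^2 * G x) atTop (nhds 0))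
    (hGbot : Tendsto G atBot (nhds 2))
    (hHbot : Tendsto H atBot (nhds 2))
    (x₀ : ℝ) (hx₀ : H x₀ < G x₀) : False := by
  have hGd : Differentiable ℝ G := hG.differentiable (by norm_num)
  have hHd : Differentiable ℝ H := hH.differentiable (by norm_num)
  have hGd2 : Differentiable ℝ (deriv G) := by
    have h : ContDiff ℝ ((1:ℕ)+1) G := by exact_mod_cast hG
    exact (contDiff_succ_iff_deriv.mp h).2.2.differentiable (by norm_num)
  have hHd2 : Differentiable ℝ (deriv H) := by
    have h : ContDiff ℝ ((1:ℕ)+1) H := by exact_mod_cast hH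
    exact (contDiff_succ_iff_deriv.mp h).2.2.differentiable (by norm_num)
  have hODE_G : ∀ x : ℝ, deriv (deriv G) x = -(x * deriv G x) - 2 * G x + (G x)^2 := by
    intro x; linear_combination 2 * hGODE x
  have hODE_H : ∀ x : ℝ, deriv (deriv H) x = -(x * deriv H x) - 2 * H x + (H x)^2 := by
    intro x; linear_combination 2 * hHODE x
  set φ : ℝ → ℝ := fun x => H x / G x with hφ_def
  set W : ℝ → ℝ := fun x => deriv H x * G x - H x * deriv G x with hW_def
  set P : ℝ → ℝ := fun x => Real.exp (x^2/2) * W x with hP_def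
  clear_value φ W P
  have hφ' : ∀ x, HasDerivAt φ (W x / (G x)^2) x := by
    intro x
    rw [hφ_def, hW_def]
    exact (hHd x).hasDerivAt.div (hGd x).hasDerivAt (ne_of_gt (hGpos x))
  have hφpos : ∀ x, 0 < φ x := by
    intro x; rw [hφ_def]; exact div_pos (hHpos x) (hGpos x)
  have hφlt : ∀ x, (φ x < 1 ↔ H x < G x) := by
    intro x; rw [hφ_def]; exact div_lt_one (hGpos x)
  have hexp2 : ∀ x : ℝ, HasDerivAt (fun y : ℝ => Real.exp (y^2/2)) (Real.exp (x^2/2) * x) x := by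
    intro x
    have hq : HasDerivAt (fun y : ℝ => y^2/2) x x := by
      have h0 := (hasDerivAt_pow 2 x).div_const 2
      first
      | exact h0
      | (refine h0.congr_deriv ?_; simp; try ring)
    exact (Real.hasDerivAt_exp (x^2/2)).comp x hq
  have hPd : ∀ x, HasDerivAt P (Real.exp (x^2/2) * (G x * H x * (H x - G x))) x := by
    intro x
    have hW : HasDerivAt W (deriv (deriv H) x * G x - H x * deriv (deriv G) x) x := by
      rw [hW_def]
      have h1 := ((hHd2 x).hasDerivAt.mul (hGd x).hasDerivAt).sub
        ((hHd x).hasDerivAt.mul (hGd2 x).hasDerivAt)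
      refine h1.congr_deriv ?_; ring
    have h := (hexp2 x).mul hW
    rw [hP_def]
    refine h.congr_deriv ?_
    rw [hODE_G x, hODE_H x, hW_def]
    simp only
    ring
  have hWP : ∀ x, W x = Real.exp (-(x^2/2)) * P x := by
    intro x
    rw [hP_def]
    simp only
    rw [← mul_assoc, ← Real.exp_add]
    norm_num
  -- limit at -infinity
  have hφbot : Tendsto φ atBot (nhds 1) := by
    rw [hφ_def]
    have h := hHbot.div hGbot (two_ne_zero)
    norm_num at h
    exact h
  -- no local min below 1
  have hnlm : ∀ z, IsLocalMin φ z → φ z < 1 → False := by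
    intro z hloc hz1
    have hd0 : deriv φ z = 0 := hloc.deriv_eq_zero
    have hW0 : W z = 0 := by
      have h := (hφ' z).deriv
      rw [hd0] at h
      rcases div_eq_zero_iff.mp h.symm with h1 | h1
      · exact h1
      · exact absurd h1 (ne_of_gt (pow_pos (hGpos z) 2))
    have hP0 : P z = 0 := by rw [hP_def]; simp only; rw [hW0, mul_zero]
    have hcont : ContinuousAt φ z := (hφ' z).differentiableAt.continuousAt
    have hev : ∀ᶠ t in nhds z, φ t < 1 := hcont (Iio_mem_nhds hz1)
    obtain ⟨δ, hδpos, hball⟩ := Metric.eventually_nhds_iff_ball.mp hev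
    have hIcc_ball : ∀ t ∈ Icc (z - δ/2) z, t ∈ Metric.ball z δ := by
      intro t ht
      rw [Metric.mem_ball, Real.dist_eq, abs_lt]
      constructor <;> [linarith [ht.1]; linarith [ht.2]]
    have hPanti : StrictAntiOn P (Icc (z - δ/2) z) := by
      apply strictAntiOn_of_deriv_neg (convex_Icc _ _)
      · exact fun t _ => (hPd t).differentiableAt.continuousAt.continuousWithinAt
      · intro t ht
        rw [interior_Icc] at ht
        rw [(hPd t).deriv]
        have hφt : φ t < 1 := hball t (hIcc_ball t (Ioo_subset_Icc_self ht))
        have hHG : H t < G t := (hφlt t).mp hφt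
        have h1 := hGpos t; have h2 := hHpos t
        apply mul_neg_of_pos_of_neg (Real.exp_pos _)
        have : (0:ℝ) < G t * H t := mul_pos h1 h2
        nlinarith
    have hmono : StrictMonoOn φ (Icc (z - δ/2) z) := by
      apply strictMonoOn_of_deriv_pos (convex_Icc _ _)
      · exact fun t _ => (hφ' t).differentiableAt.continuousAt.continuousWithinAt
      · intro t ht
        rw [interior_Icc] at ht
        rw [(hφ' t).deriv]
        apply div_pos _ (pow_pos (hGpos t) 2)
        have hPt : 0 < P t := by
          have := hPanti (Ioo_subset_Icc_self ht) (right_mem_Icc.mpr (by linarith [hδpos]))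
            ht.2
          rw [hP0] at this
          linarith [this]
        rw [hWP t]
        exact mul_pos (Real.exp_pos _) hPt
    obtain ⟨r, hrpos, hr⟩ := Metric.eventually_nhds_iff_ball.mp hloc
    set t := z - min (δ/2) r / 2 with ht_def
    clear_value t
    have hmin_pos : 0 < min (δ/2) r := lt_min (by linarith) hrpos
    have hminl : min (δ/2) r ≤ δ/2 := min_le_left _ _
    have hminr : min (δ/2) r ≤ r := min_le_right _ _
    have htz : t < z := by rw [ht_def]; linarith
    have htIcc : t ∈ Icc (z - δ/2) z := by
      constructor
      · rw [ht_def]; linarith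
      · rw [ht_def]; linarith
    have htball : t ∈ Metric.ball z r := by
      rw [Metric.mem_ball, Real.dist_eq, abs_lt]
      constructor
      · rw [ht_def]; linarith
      · rw [ht_def]; linarith
    have h1 : φ t < φ z := hmono htIcc (right_mem_Icc.mpr (by linarith)) htz
    have h2 : φ z ≤ φ t := hr t htball
    linarith
  -- core comparison lemma
  have hcore : ∀ a b, a < b → φ a ≤ φ b → φ a < 1 → False := by
    intro a b hab hfab hfa1
    set c := (1 + φ a)/2 with hc_def
    have hc1 : c < 1 := by rw [hc_def]; linarith
    have hca : φ a < c := by rw [hc_def]; linarith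
    have hev : ∀ᶠ x in atBot, c < φ x := hφbot (Ioi_mem_nhds hc1)
    obtain ⟨A', hA'⟩ := eventually_atBot.mp hev
    set A := min A' (a - 1) with hA_def
    have hAa : A < a := by
      rw [hA_def]
      calc min A' (a-1) ≤ a - 1 := min_le_right _ _
      _ < a := by linarith
    have hAb : A < b := lt_trans hAa hab
    have hφA : ∀ x, x ≤ A → c < φ x := fun x hx =>
      hA' x (le_trans hx (by rw [hA_def]; exact min_le_left _ _))
    have hφcont : ContinuousOn φ (Icc A b) :=
      fun t _ => (hφ' t).differentiableAt.continuousAt.continuousWithinAt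
    obtain ⟨y, hyIcc, hymin⟩ := isCompact_Icc.exists_isMinOn (nonempty_Icc.mpr (le_of_lt hAb))
      hφcont
    have haIcc : a ∈ Icc A b := ⟨le_of_lt hAa, le_of_lt hab⟩
    have hya : φ y ≤ φ a := hymin haIcc
    have hyA : y ≠ A := by
      intro h
      have := hφA A (le_refl A)
      rw [h] at hya
      linarith
    have hyA' : A < y := lt_of_le_of_ne hyIcc.1 (Ne.symm hyA)
    -- get an interior minimizer z
    have hz : ∃ z, z ∈ Ioo A b ∧ IsMinOn φ (Icc A b) z ∧ φ z < 1 := by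
      rcases lt_or_eq_of_le hyIcc.2 with h | h
      · exact ⟨y, ⟨hyA', h⟩, hymin, lt_of_le_of_lt hya hfa1⟩
      · refine ⟨a, ⟨hAa, hab⟩, ?_, hfa1⟩
        intro t ht
        have h1 : φ y ≤ φ t := hymin ht
        have h2 : φ b ≤ φ a := by rw [← h]; exact hya
        have h3 : φ a = φ b := le_antisymm hfab h2
        have h4 : φ y = φ b := by rw [← h]
        simp only [Set.mem_setOf_eq]
        calc φ a = φ b := h3
        _ = φ y := h4.symm
        _ ≤ φ t := h1
    obtain ⟨z, hzIoo, hzmin, hz1⟩ := hz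
    have hlocmin : IsLocalMin φ z := by
      have hmem : Ioo A b ∈ nhds z := isOpen_Ioo.mem_nhds hzIoo
      exact Filter.eventually_of_mem hmem (fun t ht => hzmin (Ioo_subset_Icc_self ht))
    exact hnlm z hlocmin hz1
  -- consequences
  have hφx₀ : φ x₀ < 1 := (hφlt x₀).mpr hx₀
  have hless1 : ∀ x, x₀ ≤ x → φ x < 1 := by
    intro x hx
    rcases lt_or_eq_of_le hx with h | h
    · by_contra hcon
      push_neg at hcon
      exact hcore x₀ x h (le_trans (le_of_lt hφx₀) hcon) hφx₀
    · rw [← h]; exact hφx₀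
  have hdecr : ∀ a b, x₀ ≤ a → a < b → φ b < φ a := by
    intro a b ha hab
    by_contra hcon
    push_neg at hcon
    exact hcore a b hab hcon (hless1 a ha)
  -- P is strictly decreasing after x₀
  have hPderiv_neg : ∀ t, x₀ < t → deriv P t < 0 := by
    intro t ht
    rw [(hPd t).deriv]
    have hHG : H t < G t := (hφlt t).mp (hless1 t (le_of_lt ht))
    have h1 := hGpos t; have h2 := hHpos t
    apply mul_neg_of_pos_of_neg (Real.exp_pos _)
    have : (0:ℝ) < G t * H t := mul_pos h1 h2
    nlinarith
  have hPneg : P (x₀ + 1) < 0 := by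
    by_contra hc
    push_neg at hc
    have hPanti : StrictAntiOn P (Icc x₀ (x₀+1)) := by
      apply strictAntiOn_of_deriv_neg (convex_Icc _ _)
      · exact fun t _ => (hPd t).differentiableAt.continuousAt.continuousWithinAt
      · intro t ht
        rw [interior_Icc] at ht
        exact hPderiv_neg t ht.1
    have hmono : StrictMonoOn φ (Icc x₀ (x₀+1)) := by
      apply strictMonoOn_of_deriv_pos (convex_Icc _ _)
      · exact fun t _ => (hφ' t).differentiableAt.continuousAt.continuousWithinAt
      · intro t ht
        rw [interior_Icc] at ht
        rw [(hφ' t).deriv]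
        apply div_pos _ (pow_pos (hGpos t) 2)
        have hPt : 0 < P t := by
          have := hPanti (Ioo_subset_Icc_self ht)
            (right_mem_Icc.mpr (by linarith)) ht.2
          linarith
        rw [hWP t]
        exact mul_pos (Real.exp_pos _) hPt
    have h1 : φ x₀ < φ (x₀+1) :=
      hmono (left_mem_Icc.mpr (by linarith)) (right_mem_Icc.mpr (by linarith)) (by linarith)
    have h2 : φ (x₀+1) < φ x₀ := hdecr x₀ (x₀+1) (le_refl x₀) (by linarith)
    linarith
  have hPanti' : StrictAntiOn P (Ici x₀) := by
    apply strictAntiOn_of_deriv_neg (convex_Ici _)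
    · exact fun t _ => (hPd t).differentiableAt.continuousAt.continuousWithinAt
    · intro t ht
      rw [interior_Ici] at ht
      exact hPderiv_neg t ht
  have hPle : ∀ x, x₀ + 1 ≤ x → P x ≤ P (x₀ + 1) := by
    intro x hx
    rcases lt_or_eq_of_le hx with h | h
    · exact le_of_lt (hPanti' (by simp only [mem_Ici]; linarith) (by simp only [mem_Ici]; linarith) h)
    · rw [← h]
  -- Gaussian bound
  have hGauss := gauss G hGd hGd2 hGpos hODE_G hGtop
  set C := Real.exp 25 * G 10 with hC_def
  have hCpos : 0 < C := by rw [hC_def]; exact mul_pos (Real.exp_pos _) (hGpos 10)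
  set p₀ := -P (x₀ + 1) with hp₀_def
  have hp₀pos : 0 < p₀ := by rw [hp₀_def]; linarith
  set k := p₀ / C^2 with hk_def
  have hkpos : 0 < k := by rw [hk_def]; exact div_pos hp₀pos (pow_pos hCpos 2)
  set M := max (x₀ + 1) 10 with hM_def
  have hφd' : ∀ x ∈ Ici M, deriv φ x ≤ -k := by
    intro x hx
    have hxM : M ≤ x := hx
    have hx10 : (10:ℝ) ≤ x := le_trans (by rw [hM_def]; exact le_max_right _ _) hxM
    have hx01 : x₀ + 1 ≤ x := le_trans (by rw [hM_def]; exact le_max_left _ _) hxM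
    rw [(hφ' x).deriv]
    have hGB := hGauss x hx10
    have hq : Real.exp (-(x^2/4)) * Real.exp (-(x^2/4)) = Real.exp (-(x^2/2)) := by
      rw [← Real.exp_add]; congr 1; ring
    have hG2 : (G x)^2 ≤ C^2 * Real.exp (-(x^2/2)) := by
      have h1 : (0:ℝ) < Real.exp (-(x^2/4)) := Real.exp_pos _
      have h2 := hGpos x
      nlinarith [hGB, hq]
    have hPx : P x ≤ -p₀ := by
      have := hPle x hx01
      rw [hp₀_def]; linarith
    have hWx : W x ≤ Real.exp (-(x^2/2)) * (-p₀) := by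
      rw [hWP x]
      exact mul_le_mul_of_nonneg_left hPx (le_of_lt (Real.exp_pos _))
    rw [div_le_iff₀ (pow_pos (hGpos x) 2)]
    have hkC : k * C^2 = p₀ := by
      rw [hk_def]; field_simp
    nlinarith [mul_le_mul_of_nonneg_left hG2 (le_of_lt hkpos), Real.exp_pos (-(x^2/2))]
  -- final contradiction
  have hφdiff : ∀ x ∈ Ici M, DifferentiableAt ℝ φ x := fun x _ => (hφ' x).differentiableAt
  have hdec := decay hφdiff hφd'
  set x₁ := M + φ M / k + 1 with hx₁_def
  have hx₁M : M ≤ x₁ := by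
    rw [hx₁_def]
    have : 0 < φ M / k := div_pos (hφpos M) hkpos
    linarith
  have h1 := hdec x₁ hx₁M
  have h2 : k * (φ M / k) = φ M := by field_simp
  have h3 := hφpos x₁
  rw [hx₁_def] at h1
  nlinarith

theorem stmt3 (G H : ℝ → ℝ) (hG : ContDiff ℝ 2 G) (hH : ContDiff ℝ 2 H)
    (hGpos : ∀ x, 0 < G x) (hHpos : ∀ x, 0 < H x)
    (hGODE : ∀ x : ℝ,
      (1/2) * deriv (deriv G) x + (x/2) * deriv G x + G x - (1/2) * (G x)^2 = 0)
    (hHODE : ∀ x : ℝ,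
      (1/2) * deriv (deriv H) x + (x/2) * deriv H x + H x - (1/2) * (H x)^2 = 0)
    (hGtop : Tendsto (fun x : ℝ => x^2 * G x) atTop (nhds 0))
    (hGbot : Tendsto G atBot (nhds 2))
    (hHtop : Tendsto (fun x : ℝ => x^2 * H x) atTop (nhds 0))
    (hHbot : Tendsto H atBot (nhds 2)) :
    G = H := by
  by_contra hne
  have hex : ∃ x, G x ≠ H x := by
    by_contra h
    push_neg at h
    exact hne (funext h)
  obtain ⟨x, hx⟩ := hex
  rcases lt_or_gt_of_ne hx with h | h
  · exact auxmain H G hH hG hHpos hGpos hHODE hGODE hHtop hHbot hGbot x h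
  · exact auxmain G H hG hH hGpos hHpos hGODE hHODE hGtop hGbot hHbot x h
end

section
/- Let G : ℝ → ℝ be twice continuously differentiable, satisfy the ODE (1/2)·G''(x) + (x/2)·G'(x) + G(x) − (1/2)·G(x)² = 0 for all x ∈ ℝ, and suppose 0 ≤ G(x) ≤ 2 and G'(x) ≤ 0 for all x, and that there is a constant c > 0 with G(y) ≤ c·y·e^{−y²/2} for all y > 2. Then there is a constant C > 0 such that |G'(x)| ≤ C·x²·e^{−x²/2} for all x > 2. -/
theorem stmt5 (G : ℝ → ℝ) (hG : ContDiff ℝ 2 G)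
    (hODE : ∀ x : ℝ,
      (1/2) * deriv (deriv G) x + (x/2) * deriv G x + G x - (1/2) * (G x)^2 = 0)
    (hbd : ∀ x, 0 ≤ G x ∧ G x ≤ 2) (hmono : ∀ x, deriv G x ≤ 0)
    (c : ℝ) (hc : 0 < c) (htail : ∀ y : ℝ, 2 < y → G y ≤ c * y * Real.exp (-y^2/2)) :
    ∃ C > (0:ℝ), ∀ x : ℝ, 2 < x → |deriv G x| ≤ C * x^2 * Real.exp (-x^2/2) := by
  -- differentiability facts
  have h1 := contDiff_succ_iff_deriv.mp (show ContDiff ℝ (1+1) G by exact_mod_cast hG)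
  have hd1 : Differentiable ℝ G := h1.1
  have hd2 : Differentiable ℝ (deriv G) := h1.2.2.differentiable one_ne_zero
  have hcont2 : Continuous (deriv G) := hd2.continuous
  -- derivative of deriv G from ODE
  have hderiv : ∀ x : ℝ, HasDerivAt (deriv G) (G x ^ 2 - 2 * G x - x * deriv G x) x := by
    intro x
    have h := (hd2 x).hasDerivAt
    have he : deriv (deriv G) x = G x ^ 2 - 2 * G x - x * deriv G x := by
      have := hODE x; linarith
    rwa [he] at h
  -- H and its derivative
  set H : ℝ → ℝ := fun x => Real.exp (x ^ 2 / 2) * deriv G x with hHdef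
  have hH : ∀ x : ℝ, HasDerivAt H (Real.exp (x ^ 2 / 2) * (G x ^ 2 - 2 * G x)) x := by
    intro x
    have hexp : HasDerivAt (fun x : ℝ => Real.exp (x ^ 2 / 2)) (x * Real.exp (x ^ 2 / 2)) x := by
      have h1 : HasDerivAt (fun x : ℝ => x ^ 2 / 2) x x := by
        simpa using (hasDerivAt_pow 2 x).div_const 2
      simpa [mul_comm] using h1.exp
    have : HasDerivAt H _ x := hexp.fun_mul (hderiv x)
    convert this using 1
    ring
  -- tail bound on [2, ∞)
  have htail2 : ∀ t : ℝ, 2 ≤ t → G t ≤ c * t * Real.exp (-t ^ 2 / 2) := by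
    intro t ht
    rcases eq_or_lt_of_le ht with rfl | h
    · have hcontf : Filter.Tendsto (fun s : ℝ => c * s * Real.exp (-s ^ 2 / 2) - G s)
        (nhdsWithin 2 (Set.Ioi 2)) (nhds (c * 2 * Real.exp (-(2:ℝ) ^ 2 / 2) - G 2)) := by
        apply Filter.Tendsto.mono_left _ nhdsWithin_le_nhds
        have hc1 : Continuous fun s : ℝ => c * s * Real.exp (-s ^ 2 / 2) :=
          (continuous_const.mul continuous_id).mul
            (Real.continuous_exp.comp (((continuous_pow 2).neg).div_const 2))
        exact ((hc1.sub hd1.continuous).tendsto 2)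
      have hev : ∀ᶠ s in nhdsWithin (2:ℝ) (Set.Ioi 2),
          (0:ℝ) ≤ c * s * Real.exp (-s ^ 2 / 2) - G s := by
        filter_upwards [self_mem_nhdsWithin] with s hs
        have := htail s hs; linarith
      have := ge_of_tendsto hcontf hev
      linarith
    · exact htail t h
  -- FTC and integral comparison
  have key : ∀ x : ℝ, 2 < x → H 2 - (c * x ^ 2 - 4 * c) ≤ H x := by
    intro x hx
    have hle : (2:ℝ) ≤ x := hx.le
    have hftc : ∫ t in (2:ℝ)..x, Real.exp (t ^ 2 / 2) * (G t ^ 2 - 2 * G t) = H x - H 2 := by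
      apply intervalIntegral.integral_eq_sub_of_hasDerivAt
      · intro t _; exact hH t
      · apply Continuous.intervalIntegrable
        exact (Real.continuous_exp.comp ((continuous_pow 2).div_const 2)).mul
          ((hd1.continuous.pow 2).sub (continuous_const.mul hd1.continuous))
    have hmonoI : ∫ t in (2:ℝ)..x, (-(2 * c * t)) ≤
        ∫ t in (2:ℝ)..x, Real.exp (t ^ 2 / 2) * (G t ^ 2 - 2 * G t) := by
      apply intervalIntegral.integral_mono_on hle
      · exact ((continuous_const.mul continuous_id).neg :
          Continuous fun t : ℝ => -(2 * c * t)).intervalIntegrable _ _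
      · apply Continuous.intervalIntegrable
        exact (Real.continuous_exp.comp ((continuous_pow 2).div_const 2)).mul
          ((hd1.continuous.pow 2).sub (continuous_const.mul hd1.continuous))
      · intro t ht
        have ht2 : (2:ℝ) ≤ t := ht.1
        have hGt := htail2 t ht2
        have hGnn := (hbd t).1
        have hGle2 := (hbd t).2
        have hexp_pos : (0:ℝ) < Real.exp (t ^ 2 / 2) := Real.exp_pos _
        -- G t ^ 2 - 2 * G t ≥ -2 * G t ≥ -2 * c * t * exp(-t^2/2)
        have h1 : -(2 * G t) ≤ G t ^ 2 - 2 * G t := by nlinarith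
        have h2 : -(2 * (c * t * Real.exp (-t ^ 2 / 2))) ≤ -(2 * G t) := by linarith
        have h3 : Real.exp (t ^ 2 / 2) * (-(2 * (c * t * Real.exp (-t ^ 2 / 2)))) ≤
            Real.exp (t ^ 2 / 2) * (G t ^ 2 - 2 * G t) := by
          apply mul_le_mul_of_nonneg_left (le_trans h2 h1) hexp_pos.le
        calc -(2 * c * t) = Real.exp (t ^ 2 / 2) * (-(2 * (c * t * Real.exp (-t ^ 2 / 2)))) := by
              rw [show -t ^ 2 / 2 = -(t ^ 2 / 2) by ring, Real.exp_neg]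
              field_simp
          _ ≤ _ := h3
    have hval : ∫ t in (2:ℝ)..x, (-(2 * c * t)) = -(c * x ^ 2 - 4 * c) := by
      have : ∫ t in (2:ℝ)..x, (-(2 * c * t)) = (-(2*c)) * ∫ t in (2:ℝ)..x, t := by
        rw [← intervalIntegral.integral_const_mul]; congr 1; ext t; ring
      rw [this, integral_id]; ring
    rw [hval, hftc] at hmonoI
    linarith
  -- conclude
  refine ⟨c + |H 2| / 4, by positivity, fun x hx => ?_⟩
  have hHx : H x ≤ 0 := mul_nonpos_of_nonneg_of_nonpos (Real.exp_pos _).le (hmono x)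
  have hk := key x hx
  have hx2 : (4:ℝ) < x ^ 2 := by nlinarith
  have hH2 : -H 2 ≤ |H 2| := neg_le_abs _
  have habs : |deriv G x| = -(deriv G x) := abs_of_nonpos (hmono x)
  have hGx : deriv G x = H x * Real.exp (-x ^ 2 / 2) := by
    rw [hHdef]
    rw [show -x ^ 2 / 2 = -(x ^ 2 / 2) by ring, Real.exp_neg]
    field_simp
  rw [habs, hGx]
  have hb : -H x ≤ (c + |H 2| / 4) * x ^ 2 := by nlinarith [abs_nonneg (H 2)]
  have : -(H x * Real.exp (-x ^ 2 / 2)) = (-H x) * Real.exp (-x ^ 2 / 2) := by ring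
  rw [this]
  exact mul_le_mul_of_nonneg_right hb (Real.exp_pos _).le
end

section
/- Let G : ℝ → ℝ be twice continuously differentiable, satisfy the ODE (1/2)·G''(x) + (x/2)·G'(x) + G(x) − (1/2)·G(x)² = 0 for all x ∈ ℝ, and suppose 0 ≤ G(x) ≤ 2 and G'(x) ≤ 0 for all x. Then |G'(x)| ≤ |G'(0)|·e^{−x²/2} for all x ≤ 0. -/
theorem stmt6 (G : ℝ → ℝ) (hG : ContDiff ℝ 2 G)
    (hODE : ∀ x : ℝ,
      (1/2) * deriv (deriv G) x + (x/2) * deriv G x + G x - (1/2) * (G x)^2 = 0)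
    (hbd : ∀ x, 0 ≤ G x ∧ G x ≤ 2) (hmono : ∀ x, deriv G x ≤ 0) :
    ∀ x : ℝ, x ≤ 0 → |deriv G x| ≤ |deriv G 0| * Real.exp (-x^2/2) := by
  have hG1 : ContDiff ℝ 1 (deriv G) :=
    (contDiff_succ_iff_deriv.mp (show ContDiff ℝ ((1 : ℕ) + 1) G by exact_mod_cast hG)).2.2
  have hdG : Differentiable ℝ (deriv G) := hG1.differentiable one_ne_zero
  set H : ℝ → ℝ := fun x => deriv G x * Real.exp (x ^ 2 / 2) with hH
  have hHderiv : ∀ x, HasDerivAt H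
      ((deriv (deriv G) x + x * deriv G x) * Real.exp (x ^ 2 / 2)) x := by
    intro x
    have h1 : HasDerivAt (deriv G) (deriv (deriv G) x) x := (hdG x).hasDerivAt
    have h2 : HasDerivAt (fun x : ℝ => x ^ 2 / 2) x x := by
      have := (hasDerivAt_pow 2 x).div_const 2
      simpa using this
    have h3 : HasDerivAt (fun x : ℝ => Real.exp (x ^ 2 / 2))
        (Real.exp (x ^ 2 / 2) * x) x := (Real.hasDerivAt_exp _).comp x h2
    have : HasDerivAt (fun y => deriv G y * Real.exp (y ^ 2 / 2))
        (deriv (deriv G) x * Real.exp (x ^ 2 / 2) + deriv G x * (Real.exp (x ^ 2 / 2) * x)) x :=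
      h1.mul h3
    convert this using 1
    ring
  have hHanti : Antitone H := by
    apply antitone_of_deriv_nonpos (fun x => (hHderiv x).differentiableAt)
    intro x
    rw [(hHderiv x).deriv]
    have key : deriv (deriv G) x + x * deriv G x = (G x) ^ 2 - 2 * G x := by
      have := hODE x; linarith
    rw [key]
    have h0 := (hbd x).1
    have h2 := (hbd x).2
    have he := Real.exp_nonneg (x ^ 2 / 2)
    nlinarith [mul_nonneg (mul_nonneg h0 (by linarith : (0:ℝ) ≤ 2 - G x)) he]
  intro x hx
  have hmx := hmono x
  have hm0 := hmono 0
  have hHx : H 0 ≤ H x := hHanti hx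
  have hepos : 0 < Real.exp (x ^ 2 / 2) := Real.exp_pos _
  rw [abs_of_nonpos hmx, abs_of_nonpos hm0,
    show (-x ^ 2 / 2 : ℝ) = -(x ^ 2 / 2) by ring, Real.exp_neg,
    ← div_eq_mul_inv, le_div_iff₀ hepos]
  have hH0 : H 0 = deriv G 0 := by simp [hH]
  have hHx' : deriv G 0 ≤ deriv G x * Real.exp (x ^ 2 / 2) := by
    rw [← hH0]; exact hHx
  nlinarith
end

section
/- Let G : ℝ → ℝ be three times continuously differentiable and satisfy the ODE (1/2)·G''(x) + (x/2)·G'(x) + G(x) − (1/2)·G(x)² = 0 for all x ∈ ℝ. Define ψ : ℝ → ℝ by ψ(x) = e^{x²/2}·G'(x). Then ψ is twice continuously differentiable and satisfies the eigenfunction equation (1/2)·ψ''(x) − (x/2)·ψ'(x) − G(x)·ψ(x) = −ψ(x) for all x ∈ ℝ; that is, ψ is an eigenfunction of the killed Ornstein–Uhlenbeck operator A^G f = (1/2)f'' − (x/2)f' − G·f with eigenvalue −1. -/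
theorem stmt8 (G : ℝ → ℝ) (hG : ContDiff ℝ 3 G)
    (hODE : ∀ x : ℝ,
      (1/2) * deriv (deriv G) x + (x/2) * deriv G x + G x - (1/2) * (G x)^2 = 0) :
    ContDiff ℝ 2 (fun x => Real.exp (x^2/2) * deriv G x) ∧
    ∀ x : ℝ,
      (1/2) * deriv (deriv (fun y => Real.exp (y^2/2) * deriv G y)) x
        - (x/2) * deriv (fun y => Real.exp (y^2/2) * deriv G y) x
        - G x * (Real.exp (x^2/2) * deriv G x)
      = -(Real.exp (x^2/2) * deriv G x) := by
  -- basic differentiability facts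
  have hG' : ContDiff ℝ 2 (deriv G) := by
    have h := (contDiff_succ_iff_deriv.mp (show ContDiff ℝ ((2:ℕ)+1) G by exact_mod_cast hG)).2
    exact h.2
  have hG'' : ContDiff ℝ 1 (deriv (deriv G)) := by
    have h := (contDiff_succ_iff_deriv.mp (show ContDiff ℝ ((1:ℕ)+1) (deriv G) by exact_mod_cast hG')).2
    exact h.2
  have hd0 : Differentiable ℝ G := hG.differentiable (by norm_num)
  have hd1 : Differentiable ℝ (deriv G) := hG'.differentiable (by norm_num)
  have hd2 : Differentiable ℝ (deriv (deriv G)) := hG''.differentiable (by norm_num)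
  have hE : ∀ x : ℝ, HasDerivAt (fun y : ℝ => Real.exp (y^2/2)) (x * Real.exp (x^2/2)) x := by
    intro x
    have h1 : HasDerivAt (fun y : ℝ => y^2/2) x x := by
      simpa using (hasDerivAt_pow 2 x).div_const 2
    simpa [mul_comm] using h1.exp
  have hEcd : ContDiff ℝ 2 (fun x : ℝ => Real.exp (x^2/2)) :=
    Real.contDiff_exp.comp ((contDiff_id.pow 2).div_const 2)
  refine ⟨hEcd.mul hG', ?_⟩
  intro x
  -- first derivative of ψ
  have hψ1 : ∀ y : ℝ, HasDerivAt (fun z => Real.exp (z^2/2) * deriv G z)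
      (y * Real.exp (y^2/2) * deriv G y + Real.exp (y^2/2) * deriv (deriv G) y) y := by
    intro y
    exact (hE y).mul ((hd1 y).hasDerivAt)
  have hD1 : deriv (fun z => Real.exp (z^2/2) * deriv G z)
      = fun y => y * Real.exp (y^2/2) * deriv G y + Real.exp (y^2/2) * deriv (deriv G) y :=
    funext fun y => (hψ1 y).deriv
  -- second derivative
  have hψ2 : HasDerivAt (fun y => y * Real.exp (y^2/2) * deriv G y + Real.exp (y^2/2) * deriv (deriv G) y)
      (((1 * Real.exp (x^2/2) + x * (x * Real.exp (x^2/2))) * deriv G x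
          + x * Real.exp (x^2/2) * deriv (deriv G) x)
        + (x * Real.exp (x^2/2) * deriv (deriv G) x
          + Real.exp (x^2/2) * deriv (deriv (deriv G)) x)) x := by
    exact (((hasDerivAt_id x).mul (hE x)).mul ((hd1 x).hasDerivAt)).add
      ((hE x).mul ((hd2 x).hasDerivAt))
  have hD2 : deriv (deriv (fun z => Real.exp (z^2/2) * deriv G z)) x
      = ((1 * Real.exp (x^2/2) + x * (x * Real.exp (x^2/2))) * deriv G x
          + x * Real.exp (x^2/2) * deriv (deriv G) x)
        + (x * Real.exp (x^2/2) * deriv (deriv G) x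
          + Real.exp (x^2/2) * deriv (deriv (deriv G)) x) := by
    rw [hD1]; exact hψ2.deriv
  -- differentiate the ODE
  have hzero : (1/2) * deriv (deriv (deriv G)) x + ((1/2) * deriv G x + (x/2) * deriv (deriv G) x)
      + deriv G x - (1/2) * (2 * G x ^ 1 * deriv G x) = 0 := by
    have hF : HasDerivAt (fun y => (1/2) * deriv (deriv G) y + (y/2) * deriv G y + G y - (1/2) * (G y)^2)
        ((1/2) * deriv (deriv (deriv G)) x + ((1/2) * deriv G x + (x/2) * deriv (deriv G) x)
          + deriv G x - (1/2) * (2 * G x ^ 1 * deriv G x)) x := by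
      exact ((((hd2 x).hasDerivAt.const_mul (1/2)).add
        (((hasDerivAt_id x).div_const 2).mul ((hd1 x).hasDerivAt))).add
        ((hd0 x).hasDerivAt)).sub (((hd0 x).hasDerivAt.pow 2).const_mul (1/2))
    have hconst : (fun y => (1/2) * deriv (deriv G) y + (y/2) * deriv G y + G y - (1/2) * (G y)^2)
        = fun _ => (0:ℝ) := funext hODE
    rw [hconst] at hF
    exact hF.unique (hasDerivAt_const x 0)
  rw [hD2, hD1]
  beta_reduce
  simp only [pow_one] at hzero
  linear_combination Real.exp (x^2/2) * hzero
end

section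
/- Let H : ℝ → (0,∞) be continuous with lim_{x→−∞} H(x) = 2. Then for every open set U ⊆ ℝ with U ∩ (−∞,0] ≠ ∅, one has lim_{t↓0} ∫_U t⁻¹·H(t^{-1/2}·x) dx = +∞. -/
open Filter MeasureTheory

theorem stmt12 (H : ℝ → ℝ) (hH : Continuous H) (hH0 : ∀ y, 0 < H y)
    (hlim : Tendsto H atBot (nhds 2)) :
    ∀ U : Set ℝ, IsOpen U → (U ∩ Set.Iic 0).Nonempty →
      Tendsto (fun t : ℝ => ∫⁻ x in U, ENNReal.ofReal (t⁻¹ * H ((Real.sqrt t)⁻¹ * x)))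
        (nhdsWithin 0 (Set.Ioi 0)) (nhds ⊤) := by
  rintro U hU ⟨a, haU, ha⟩
  have ha' : a ≤ 0 := ha
  obtain ⟨ε, hε, hball⟩ := Metric.isOpen_iff.1 hU a haU
  set b := a - ε with hb
  set c := a - ε/2 with hc
  have hbc : b < c := by rw [hb, hc]; linarith
  have hc0 : c < 0 := by rw [hc]; linarith
  have hsub : Set.Ioo b c ⊆ U := by
    intro x hx
    obtain ⟨hx1, hx2⟩ := hx
    apply hball
    rw [Metric.mem_ball, Real.dist_eq, abs_lt]
    rw [hb] at hx1
    rw [hc] at hx2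
    constructor <;> linarith
  -- get M with H ≥ 1 below M, M < 0
  obtain ⟨M', hM'⟩ := eventually_atBot.1 (hlim.eventually (eventually_gt_nhds one_lt_two))
  set M := min M' (-1) with hM
  have hM0 : M < 0 := lt_of_le_of_lt (min_le_right _ _) (by norm_num)
  have hHM : ∀ y ≤ M, 1 ≤ H y := fun y hy =>
    le_of_lt (hM' y (le_trans hy (min_le_left _ _)))
  set δ : ℝ := (c / M) ^ 2 with hδ
  have hcM : 0 < c / M := div_pos_of_neg_of_neg hc0 hM0
  have hδ0 : 0 < δ := by positivity
  -- lower bound tends to top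
  have h1 : Tendsto (fun t : ℝ => ENNReal.ofReal t⁻¹) (nhdsWithin 0 (Set.Ioi 0)) (nhds ⊤) :=
    ENNReal.tendsto_ofReal_atTop.comp tendsto_inv_nhdsGT_zero
  have h2 : Tendsto (fun t : ℝ => ENNReal.ofReal t⁻¹ * ENNReal.ofReal (c - b))
      (nhdsWithin 0 (Set.Ioi 0)) (nhds ⊤) := by
    have := ENNReal.Tendsto.mul_const h1 (Or.inl ENNReal.top_ne_zero)
      (b := ENNReal.ofReal (c - b))
    rwa [ENNReal.top_mul (by simp [ENNReal.ofReal_eq_zero]; linarith)] at this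
  apply tendsto_nhds_top_mono h2
  filter_upwards [Ioo_mem_nhdsGT_of_mem (Set.left_mem_Ico.2 hδ0)] with t ht
  obtain ⟨ht0, htδ⟩ := ht
  have hst : 0 < Real.sqrt t := Real.sqrt_pos.2 ht0
  have hstδ : Real.sqrt t < c / M := by
    have : Real.sqrt t < Real.sqrt δ := Real.sqrt_lt_sqrt ht0.le htδ
    rwa [hδ, Real.sqrt_sq hcM.le] at this
  -- key: for x ∈ Ioo b c, (sqrt t)⁻¹ * x ≤ M
  have hkey : ∀ x ∈ Set.Ioo b c, (Real.sqrt t)⁻¹ * x ≤ M := by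
    intro x hx
    have hx2 : x ≤ c := hx.2.le
    have h3 : c ≤ M * Real.sqrt t := by
      have := (le_div_iff_of_neg hM0).1 hstδ.le
      linarith
    calc (Real.sqrt t)⁻¹ * x ≤ (Real.sqrt t)⁻¹ * c := by
          apply mul_le_mul_of_nonneg_left hx2 (by positivity)
      _ ≤ (Real.sqrt t)⁻¹ * (M * Real.sqrt t) := by
          apply mul_le_mul_of_nonneg_left h3 (by positivity)
      _ = M := by field_simp
  calc ENNReal.ofReal t⁻¹ * ENNReal.ofReal (c - b)
      = ∫⁻ _ in Set.Ioo b c, ENNReal.ofReal t⁻¹ := by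
        rw [setLIntegral_const, Real.volume_Ioo, mul_comm]
    _ ≤ ∫⁻ x in Set.Ioo b c, ENNReal.ofReal (t⁻¹ * H ((Real.sqrt t)⁻¹ * x)) := by
        apply setLIntegral_mono (by fun_prop)
        intro x hx
        apply ENNReal.ofReal_le_ofReal
        nlinarith [hHM _ (hkey x hx), inv_pos.2 ht0]
    _ ≤ ∫⁻ x in U, ENNReal.ofReal (t⁻¹ * H ((Real.sqrt t)⁻¹ * x)) :=
        lintegral_mono_set hsub
end

section
/- Let (Ω, F, P) be a probability space, (F_n)_{n∈ℕ} a filtration of sub-σ-algebras of F, and F_∞ the smallest σ-algebra containing F_n for all n. Let (Y_n)_{n∈ℕ} be random variables and W an integrable random variable with |Y_n| ≤ W for all n. Then, almost surely, limsup_n E[Y_n | F_n] ≤ E[ limsup_n Y_n | F_∞ ]. -/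
open Filter MeasureTheory

open Topology in
private lemma aux_tendsto_limsup (u : ℕ → ℝ) (c : ℝ) (h : ∀ n, |u n| ≤ c) :
    Tendsto (fun m => ⨆ k, u (k + m)) atTop (𝓝 (limsup u atTop)) := by
  set Z : ℕ → ℝ := fun m => ⨆ k, u (k + m) with hZ
  have hbdd : ∀ m, BddAbove (Set.range fun k => u (k + m)) :=
    fun m => ⟨c, by rintro x ⟨k, rfl⟩; exact (abs_le.1 (h _)).2⟩
  have hZle : ∀ m, Z m ≤ c := fun m => ciSup_le fun k => (abs_le.1 (h _)).2
  have hZge : ∀ m, -c ≤ Z m := fun m =>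
    le_trans (abs_le.1 (h m)).1 (by simpa using le_ciSup (hbdd m) 0)
  have hanti : Antitone Z := by
    intro a b hab
    refine ciSup_le fun k => ?_
    have : u (k + b) = u ((k + (b - a)) + a) := by congr 1; omega
    rw [this]
    exact le_ciSup (hbdd a) _
  have hbb : BddBelow (Set.range Z) := ⟨-c, by rintro x ⟨m, rfl⟩; exact hZge m⟩
  have htend : Tendsto Z atTop (𝓝 (⨅ m, Z m)) := tendsto_atTop_ciInf hanti hbb
  have heq : (⨅ m, Z m) = limsup u atTop := by
    rw [limsup_eq]
    apply le_antisymm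
    · refine le_csInf ⟨c, Eventually.of_forall fun n => (abs_le.1 (h n)).2⟩ ?_
      intro a ha
      obtain ⟨m, hm⟩ := eventually_atTop.1 ha
      exact ciInf_le_of_le hbb m (ciSup_le fun k => hm _ (by omega))
    · refine le_ciInf fun m => csInf_le ?_ ?_
      · refine ⟨-c, fun a ha => ?_⟩
        obtain ⟨n, hn⟩ := ha.exists
        exact le_trans (abs_le.1 (h n)).1 hn
      · refine eventually_atTop.2 ⟨m, fun n hn => ?_⟩
        have : u n = u ((n - m) + m) := by congr 1; omega
        rw [this]
        exact le_ciSup (hbdd m) _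
  rwa [heq] at htend

theorem stmt15 {Ω : Type*} {m0 : MeasurableSpace Ω} (P : Measure Ω)
    [IsProbabilityMeasure P] (F : Filtration ℕ m0)
    (Y : ℕ → Ω → ℝ) (W : Ω → ℝ)
    (hY : ∀ n, Measurable (Y n))
    (hW : Integrable W P)
    (hbd : ∀ n ω, |Y n ω| ≤ W ω) :
    ∀ᵐ ω ∂P,
      limsup (fun n => (P[Y n | F n]) ω) atTop ≤
        (P[(fun ω' => limsup (fun n => Y n ω') atTop) | ⨆ n, (F n : MeasurableSpace Ω)]) ω := by
  have hle : (⨆ n, (F n : MeasurableSpace Ω)) ≤ m0 := iSup_le fun n => F.le n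
  haveI : SigmaFinite (P.trim hle) := by infer_instance
  set L : Ω → ℝ := fun ω' => limsup (fun n => Y n ω') atTop with hL
  -- integrability of Y n
  have hYint : ∀ n, Integrable (Y n) P := fun n =>
    hW.mono' (hY n).aestronglyMeasurable
      (Eventually.of_forall fun ω => by rw [Real.norm_eq_abs]; exact hbd n ω)
  -- tail suprema
  set Z : ℕ → Ω → ℝ := fun m ω => ⨆ k, Y (k + m) ω with hZ
  have hbddA : ∀ m ω, BddAbove (Set.range fun k => Y (k + m) ω) :=
    fun m ω => ⟨W ω, by rintro x ⟨k, rfl⟩; exact (abs_le.1 (hbd _ ω)).2⟩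
  have hZbd : ∀ m ω, |Z m ω| ≤ W ω := by
    intro m ω
    rw [abs_le]
    constructor
    · exact le_trans (abs_le.1 (hbd m ω)).1 (by simpa using le_ciSup (hbddA m ω) 0)
    · exact ciSup_le fun k => (abs_le.1 (hbd _ ω)).2
  have hZmeas : ∀ m, Measurable[m0] (Z m) := fun m => Measurable.iSup fun k => hY _
  have hZint : ∀ m, Integrable (Z m) P := fun m =>
    hW.mono' (hZmeas m).aestronglyMeasurable
      (Eventually.of_forall fun ω => by rw [Real.norm_eq_abs]; exact hZbd m ω)
  have htendZ : ∀ ω, Tendsto (fun m => Z m ω) atTop (nhds (L ω)) :=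
    fun ω => aux_tendsto_limsup (fun n => Y n ω) (W ω) (fun n => hbd n ω)
  have hLmeas : Measurable[m0] L :=
    measurable_of_tendsto_metrizable hZmeas (tendsto_pi_nhds.2 htendZ)
  -- coboundedness ingredients
  have hWlevy := MeasureTheory.tendsto_ae_condExp (μ := P) (ℱ := F) W
  have habs : ∀ n, ∀ᵐ ω ∂P, |(P[Y n|F n]) ω| ≤ (P[W|F n]) ω := by
    intro n
    have h1 : (P[Y n|F n]) ≤ᵐ[P] (P[W|F n]) :=
      condExp_mono (hYint n) hW (Eventually.of_forall fun ω => (abs_le.1 (hbd n ω)).2)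
    have h2 : (P[fun ω => -W ω|F n]) ≤ᵐ[P] (P[Y n|F n]) :=
      condExp_mono hW.neg (hYint n) (Eventually.of_forall fun ω => (abs_le.1 (hbd n ω)).1)
    have h3 : (P[fun ω => -W ω|F n]) =ᵐ[P] fun ω => -(P[W|F n]) ω := condExp_neg W (F n)
    filter_upwards [h1, h2, h3] with ω h1 h2 h3
    rw [abs_le]
    exact ⟨by rw [← h3]; exact h2, h1⟩
  have haball : ∀ᵐ ω ∂P, ∀ n, |(P[Y n|F n]) ω| ≤ (P[W|F n]) ω := ae_all_iff.2 habs
  -- Step A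
  have hA : ∀ m, ∀ᵐ ω ∂P,
      limsup (fun n => (P[Y n|F n]) ω) atTop ≤ (P[Z m|(⨆ n, (F n : MeasurableSpace Ω))]) ω := by
    intro m
    have hmono : ∀ n, ∀ᵐ ω ∂P, m ≤ n → (P[Y n|F n]) ω ≤ (P[Z m|F n]) ω := by
      intro n
      by_cases hmn : m ≤ n
      · have : (P[Y n|F n]) ≤ᵐ[P] (P[Z m|F n]) := by
          refine condExp_mono (hYint n) (hZint m) (Eventually.of_forall fun ω => ?_)
          have : Y n ω = Y ((n - m) + m) ω := by congr 1; omega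
          rw [this]
          exact le_ciSup (hbddA m ω) _
        filter_upwards [this] with ω h _
        exact h
      · exact Eventually.of_forall fun ω h => absurd h hmn
    have hallm : ∀ᵐ ω ∂P, ∀ n, m ≤ n → (P[Y n|F n]) ω ≤ (P[Z m|F n]) ω := ae_all_iff.2 hmono
    have hZlevy := MeasureTheory.tendsto_ae_condExp (μ := P) (ℱ := F) (Z m)
    filter_upwards [hallm, hZlevy, hWlevy, haball] with ω h1 h2 h3 h4
    have hcob : IsCoboundedUnder (· ≤ ·) atTop (fun n => (P[Y n|F n]) ω) := by
      refine IsBoundedUnder.isCoboundedUnder_le ?_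
      obtain ⟨b, hb⟩ := h3.neg.isBoundedUnder_ge
      refine ⟨b, ?_⟩
      rw [eventually_map] at hb ⊢
      filter_upwards [hb] with n hn
      exact le_trans hn (neg_le_of_abs_le (h4 n))
    calc limsup (fun n => (P[Y n|F n]) ω) atTop
        ≤ limsup (fun n => (P[Z m|F n]) ω) atTop := by
          refine limsup_le_limsup ?_ hcob h2.isBoundedUnder_le
          exact eventually_atTop.2 ⟨m, h1⟩
      _ = (P[Z m|(⨆ n, (F n : MeasurableSpace Ω))]) ω := h2.limsup_eq
  have hB : ∀ᵐ ω ∂P, ∀ m,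
      limsup (fun n => (P[Y n|F n]) ω) atTop ≤ (P[Z m|(⨆ n, (F n : MeasurableSpace Ω))]) ω := ae_all_iff.2 hA
  -- Step C : L¹ convergence and a.e. subsequence
  have hC : Tendsto (fun m => condExpL1 hle P (Z m)) atTop (nhds (condExpL1 hle P L)) :=
    tendsto_condExpL1_of_dominated_convergence hle W
      (fun m => (hZmeas m).aestronglyMeasurable) hW
      (fun m => Eventually.of_forall fun ω => by rw [Real.norm_eq_abs]; exact hZbd m ω)
      (Eventually.of_forall htendZ)
  have hC' : Tendsto
      (fun m => eLpNorm (⇑(condExpL1 hle P (Z m)) - ⇑(condExpL1 hle P L)) 1 P) atTop (nhds 0) :=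
    (Lp.tendsto_Lp_iff_tendsto_eLpNorm' _ _).1 hC
  have hmeasC : TendstoInMeasure P (fun m => ⇑(condExpL1 hle P (Z m))) atTop
      ⇑(condExpL1 hle P L) :=
    tendstoInMeasure_of_tendsto_eLpNorm one_ne_zero
      (fun m => Lp.aestronglyMeasurable _) (Lp.aestronglyMeasurable _) hC'
  obtain ⟨ns, hns⟩ := hmeasC.exists_seq_tendsto_ae'
  have heqm : ∀ᵐ ω ∂P, ∀ m, (P[Z m|(⨆ n, (F n : MeasurableSpace Ω))]) ω = (condExpL1 hle P (Z m) : Ω → ℝ) ω :=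
    ae_all_iff.2 fun m => condExp_ae_eq_condExpL1 hle (Z m)
  have heqL : (P[L|(⨆ n, (F n : MeasurableSpace Ω))]) =ᵐ[P] ⇑(condExpL1 hle P L) := condExp_ae_eq_condExpL1 hle L
  filter_upwards [hB, hns.2, heqm, heqL] with ω h1 h2 h3 h4
  have htend : Tendsto (fun i => (P[Z (ns i)|(⨆ n, (F n : MeasurableSpace Ω))]) ω) atTop (nhds ((P[L|(⨆ n, (F n : MeasurableSpace Ω))]) ω)) := by
    rw [h4]
    exact h2.congr fun i => (h3 (ns i)).symm
  exact ge_of_tendsto' htend fun i => h1 (ns i)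
end
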